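/- arXiv:1412.5414 — 3 statements merged into one kernel-verified Lean document; each statement's English description precedes it below -/
import Mathlib

section
/- Let a ∈ (0,1), M > 0, and Φ : [0,∞) → [0,∞) be C¹ with Φ(0)=0, Φ > 0 on (0,∞), satisfying s·Φ'(s) ≤ (1/a)·Φ(s) for all s > 0. Let β = Φ⁻¹ and j(r) = ∫₀ʳ β(r') dr'. Then for all w₁, w₂ ∈ [0, M], |j(Φ(w₁)) - j(Φ(w₂))| ≤ (Φ(M)/a)·|w₁ - w₂|. -/
open Real Set intervalIntegral

theorem stmt_10 (a M : ℝ) (ha : a ∈ Set.Ioo (0:ℝ) 1) (hM : 0 < M)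
    (Φ β : ℝ → ℝ)
    (hC1 : ContDiff ℝ 1 Φ) (h0 : Φ 0 = 0)
    (hpos : ∀ s > (0:ℝ), 0 < Φ s)
    (hmono : StrictMonoOn Φ (Set.Ici 0))
    (hstruct : ∀ s > (0:ℝ), s * deriv Φ s ≤ (1 / a) * Φ s)
    (hinv : ∀ s ≥ (0:ℝ), β (Φ s) = s)
    (j : ℝ → ℝ)
    (hj : ∀ r ≥ (0:ℝ), j r = ∫ r' in (0:ℝ)..r, β r') :
    ∀ w₁ ∈ Set.Icc (0:ℝ) M, ∀ w₂ ∈ Set.Icc (0:ℝ) M,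
      |j (Φ w₁) - j (Φ w₂)| ≤ (Φ M / a) * |w₁ - w₂| := by
  obtain ⟨ha0, ha1⟩ := ha
  set K := Φ M with hKdef
  have hK : 0 < K := hpos M hM
  have hΦcont : Continuous Φ := hC1.continuous
  have hΦdiff : ∀ w : ℝ, HasDerivAt Φ (deriv Φ w) w := fun w =>
    ((hC1.differentiable one_ne_zero) w).hasDerivAt
  have hmonoOn : MonotoneOn Φ (Set.Ici 0) := hmono.monotoneOn
  have hΦnn : ∀ w ≥ (0:ℝ), 0 ≤ Φ w := by
    intro w hw
    have := hmonoOn (self_mem_Ici) hw hw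
    rwa [h0] at this
  have hΦleK : ∀ w ∈ Set.Icc (0:ℝ) M, Φ w ∈ Set.Icc (0:ℝ) K := by
    intro w hw
    exact ⟨hΦnn w hw.1, hmonoOn hw.1 (le_trans hw.1 hw.2) hw.2⟩
  -- surjectivity of Φ onto [0, K]
  have surj : ∀ r ∈ Set.Icc (0:ℝ) K, ∃ s ∈ Set.Icc (0:ℝ) M, Φ s = r := by
    intro r hr
    have : Set.Icc (Φ 0) (Φ M) ⊆ Φ '' Set.Icc 0 M :=
      intermediate_value_Icc hM.le hΦcont.continuousOn
    rw [h0] at this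
    obtain ⟨s, hs, hsr⟩ := this hr
    exact ⟨s, hs, hsr⟩
  have hβ : ∀ r ∈ Set.Icc (0:ℝ) K, β r ∈ Set.Icc (0:ℝ) M ∧ Φ (β r) = r := by
    intro r hr
    obtain ⟨s, hs, hsr⟩ := surj r hr
    rw [← hsr, hinv s hs.1]
    exact ⟨hs, rfl⟩
  -- β is strictly monotone on [0, K]
  have βmono : StrictMonoOn β (Set.Icc 0 K) := by
    intro r₁ h₁ r₂ h₂ hlt
    obtain ⟨hm₁, he₁⟩ := hβ r₁ h₁
    obtain ⟨hm₂, he₂⟩ := hβ r₂ h₂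
    by_contra hcon
    push_neg at hcon
    have : Φ (β r₂) ≤ Φ (β r₁) := hmonoOn hm₂.1 hm₁.1 hcon
    rw [he₁, he₂] at this
    exact absurd hlt (not_lt.mpr this)
  have βimage : Set.Icc (0:ℝ) M ⊆ β '' Set.Icc 0 K := by
    intro t ht
    exact ⟨Φ t, hΦleK t ht, hinv t ht.1⟩
  -- continuity of β on [0, K]
  have βcont : ContinuousOn β (Set.Icc 0 K) := by
    intro r hr
    have hβr := hβ r hr
    -- right continuity (when r < K)
    have right : r < K → ContinuousWithinAt β (Set.Ici r) r := by
      intro hrK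
      have hβrM : β r < M := by
        have : Φ (β r) < Φ M := by rw [hβr.2]; exact hrK
        exact (hmono.lt_iff_lt hβr.1.1 (le_trans hβr.1.1 hβr.1.2)).mp this
      refine βmono.continuousWithinAt_right_of_image_mem_nhdsWithin ?_ ?_
      · exact Filter.mem_of_superset
          (Icc_mem_nhdsGE_of_mem ⟨le_refl r, hrK⟩)
          (Set.Icc_subset_Icc hr.1 le_rfl)
      · refine Filter.mem_of_superset
          (Icc_mem_nhdsGE_of_mem ⟨le_refl (β r), hβrM⟩) ?_
        exact fun t ht => βimage ⟨le_trans hβr.1.1 ht.1, ht.2⟩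
    -- left continuity (when 0 < r)
    have left : 0 < r → ContinuousWithinAt β (Set.Iic r) r := by
      intro hr0
      have hβr0 : 0 < β r := by
        have : Φ 0 < Φ (β r) := by rw [hβr.2, h0]; exact hr0
        exact (hmono.lt_iff_lt self_mem_Ici hβr.1.1).mp this
      refine βmono.continuousWithinAt_left_of_image_mem_nhdsWithin ?_ ?_
      · exact Filter.mem_of_superset
          (Icc_mem_nhdsLE_of_mem ⟨hr0, le_refl r⟩)
          (Set.Icc_subset_Icc le_rfl hr.2)
      · refine Filter.mem_of_superset
          (Icc_mem_nhdsLE_of_mem ⟨hβr0, le_refl (β r)⟩) ?_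
        exact fun t ht => βimage ⟨ht.1, le_trans ht.2 hβr.1.2⟩
    rcases eq_or_lt_of_le hr.2 with hrK | hrK
    · exact (left (hrK ▸ hK)).mono (fun x hx => by rw [hrK]; exact hx.2)
    · rcases eq_or_lt_of_le hr.1 with hr0 | hr0
      · exact (right hrK).mono (fun x hx => hr0 ▸ hx.1)
      · exact ((left hr0).union (right hrK)).mono
          (fun x _ => (le_total x r).imp id id)
  -- clamped version of β, continuous on all of ℝ
  set βc : ℝ → ℝ := fun r => β (max 0 (min r K)) with hβcdef
  have hclamp : ∀ r : ℝ, max 0 (min r K) ∈ Set.Icc (0:ℝ) K := by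
    intro r
    exact ⟨le_max_left _ _, max_le hK.le (min_le_right _ _)⟩
  have hβc_cont : Continuous βc := by
    apply βcont.comp_continuous
    · exact continuous_const.max (continuous_id.min continuous_const)
    · exact hclamp
  have hβc_eq : ∀ r ∈ Set.Icc (0:ℝ) K, βc r = β r := by
    intro r hr
    simp only [hβcdef, min_eq_left hr.2, max_eq_right hr.1]
  -- F w = ∫_0^{Φ w} βc, with derivative w * Φ'(w) on [0, M]
  set F : ℝ → ℝ := fun w => ∫ t in (0:ℝ)..(Φ w), βc t with hFdef
  have hF : ∀ w ∈ Set.Icc (0:ℝ) M, HasDerivWithinAt F (w * deriv Φ w) (Set.Icc 0 M) w := by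
    intro w hw
    have hH : HasDerivAt (fun u => ∫ t in (0:ℝ)..u, βc t) (βc (Φ w)) (Φ w) :=
      (hβc_cont.integral_hasStrictDerivAt 0 (Φ w)).hasDerivAt
    have hcomp := hH.comp w (hΦdiff w)
    have hval : βc (Φ w) = w := by
      rw [hβc_eq _ (hΦleK w hw), hinv w hw.1]
    rw [hval] at hcomp
    exact hcomp.hasDerivWithinAt
  -- bound on the derivative
  have hCnn : 0 ≤ K / a := div_nonneg hK.le ha0.le
  have bound : ∀ w ∈ Set.Icc (0:ℝ) M, ‖w * deriv Φ w‖ ≤ K / a := by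
    intro w hw
    rcases eq_or_lt_of_le hw.1 with hw0 | hw0
    · rw [← hw0]; simpa using hCnn
    · have hderiv_nn : 0 ≤ deriv Φ w := by
        have hslope : Filter.Tendsto (slope Φ w) (nhdsWithin w (Set.Ioi w)) (nhds (deriv Φ w)) :=
          ((hasDerivAt_iff_tendsto_slope.mp (hΦdiff w)).mono_left
            (nhdsWithin_mono _ (fun x hx => ne_of_gt hx)))
        refine ge_of_tendsto hslope ?_
        filter_upwards [self_mem_nhdsWithin] with x hx
        rw [slope_def_field]
        have hxw : w < x := hx
        exact div_nonneg
          (sub_nonneg.mpr (hmonoOn (le_of_lt hw0) (le_of_lt (lt_trans hw0 hxw)) hxw.le))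
          (sub_nonneg.mpr hxw.le)
      have h1 : w * deriv Φ w ≤ (1 / a) * Φ w := hstruct w hw0
      have h2 : (1 / a) * Φ w ≤ (1 / a) * K :=
        mul_le_mul_of_nonneg_left (hmonoOn hw.1 (le_trans hw.1 hw.2) hw.2)
          (by positivity)
      rw [Real.norm_eq_abs, abs_of_nonneg (mul_nonneg hw.1 hderiv_nn)]
      calc w * deriv Φ w ≤ (1 / a) * K := le_trans h1 h2
        _ = K / a := by ring
  -- j (Φ w) = F w on [0, M]
  have hjF : ∀ w ∈ Set.Icc (0:ℝ) M, j (Φ w) = F w := by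
    intro w hw
    rw [hj (Φ w) (hΦnn w hw.1), hFdef]
    apply intervalIntegral.integral_congr
    intro t ht
    rw [Set.uIcc_of_le (hΦnn w hw.1)] at ht
    exact (hβc_eq t ⟨ht.1, le_trans ht.2 (hΦleK w hw).2⟩).symm
  -- conclude via the mean value inequality
  intro w₁ hw₁ w₂ hw₂
  have key := (convex_Icc (0:ℝ) M).norm_image_sub_le_of_norm_hasDerivWithin_le
    hF bound hw₂ hw₁
  rw [hjF w₁ hw₁, hjF w₂ hw₂]
  simpa [Real.norm_eq_abs] using key
end

section
/- Let φ ∈ (0,1), p ∈ (0,1), β(r) = φ·r + (1-φ)·r^p for r ≥ 0, and Φ = β⁻¹. Then for every M > 0 there exists ā > 0 such that s·Φ'(s)/Φ(s) ≥ 1 + ā for all s ∈ (0, M]. -/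
open Real Set

theorem stmt_11 (p φ : ℝ) (hp : p ∈ Set.Ioo (0:ℝ) 1) (hφ : φ ∈ Set.Ioo (0:ℝ) 1)
    (β Φ : ℝ → ℝ)
    (hβ : ∀ r ≥ (0:ℝ), β r = φ * r + (1 - φ) * r ^ p)
    (hinv₁ : ∀ r ≥ (0:ℝ), Φ (β r) = r)
    (hinv₂ : ∀ s ≥ (0:ℝ), β (Φ s) = s)
    (hdiff : ∀ s > (0:ℝ), DifferentiableAt ℝ Φ s) :
    ∀ M > (0:ℝ), ∃ abar > (0:ℝ), ∀ s ∈ Set.Ioc (0:ℝ) M,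
      1 + abar ≤ s * deriv Φ s / Φ s := by
  obtain ⟨hp0, hp1⟩ := hp
  obtain ⟨hφ0, hφ1⟩ := hφ
  -- continuity of the explicit formula
  have hgc : Continuous (fun r : ℝ => φ * r + (1 - φ) * r ^ p) := by
    have := Real.continuous_rpow_const hp0.le
    continuity
  -- surjectivity: every s ≥ 0 has a nonneg preimage under β
  have hsurj : ∀ s ≥ (0:ℝ), ∃ r, 0 ≤ r ∧ β r = s := by
    intro s hs
    have hsφ : (0:ℝ) ≤ s / φ := div_nonneg hs hφ0.le
    have h0 : (fun r : ℝ => φ * r + (1 - φ) * r ^ p) 0 = 0 := by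
      simp [Real.zero_rpow hp0.ne']
    have h1 : s ≤ (fun r : ℝ => φ * r + (1 - φ) * r ^ p) (s / φ) := by
      have h2 : (0:ℝ) ≤ (1 - φ) * (s / φ) ^ p := by
        have := Real.rpow_nonneg hsφ p
        nlinarith
      have : φ * (s / φ) = s := by field_simp
      simp only []
      nlinarith
    have hmem : s ∈ Set.Icc ((fun r : ℝ => φ * r + (1 - φ) * r ^ p) 0)
        ((fun r : ℝ => φ * r + (1 - φ) * r ^ p) (s / φ)) := by
      rw [h0]; exact ⟨hs, h1⟩
    obtain ⟨r, hr, hrs⟩ := intermediate_value_Icc hsφ hgc.continuousOn hmem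
    exact ⟨r, hr.1, by rw [hβ r hr.1]; exact hrs⟩
  have hΦnonneg : ∀ s ≥ (0:ℝ), 0 ≤ Φ s := by
    intro s hs
    obtain ⟨r, hr0, hrs⟩ := hsurj s hs
    rw [← hrs, hinv₁ r hr0]; exact hr0
  -- monotonicity of β on [0,∞)
  have hmono : ∀ r1 r2 : ℝ, 0 ≤ r1 → 0 ≤ r2 → β r1 ≤ β r2 → r1 ≤ r2 := by
    intro r1 r2 h1 h2 hle
    by_contra h
    push_neg at h
    rw [hβ r1 h1, hβ r2 h2] at hle
    have hrp : r2 ^ p ≤ r1 ^ p := Real.rpow_le_rpow h2 h.le hp0.le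
    nlinarith
  intro M hM
  set R := Φ M with hRdef
  have hR0 : 0 ≤ R := hΦnonneg M hM.le
  set C := max R 1 ^ (1 - p) with hCdef
  have hC1 : (1:ℝ) ≤ max R 1 := le_max_right R 1
  have hCpos : 0 < C := Real.rpow_pos_of_pos (lt_of_lt_of_le one_pos hC1) _
  set K := φ * C + (1 - φ) * p with hKdef
  have hKpos : 0 < K := by
    have : 0 < φ * C := mul_pos hφ0 hCpos
    nlinarith
  have hA0 : 0 < (1 - φ) * (1 - p) / K :=
    div_pos (mul_pos (by linarith) (by linarith)) hKpos
  refine ⟨(1 - φ) * (1 - p) / K, hA0, ?_⟩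
  intro s hs
  obtain ⟨hs0, hsM⟩ := hs
  set r := Φ s with hrdef
  have hr0 : 0 ≤ r := hΦnonneg s hs0.le
  have hβr : β r = s := hinv₂ s hs0.le
  have hrpos : 0 < r := by
    rcases hr0.lt_or_eq with h | h
    · exact h
    · exfalso
      have hzero : β 0 = 0 := by rw [hβ 0 le_rfl]; simp [Real.zero_rpow hp0.ne']
      have : s = 0 := by rw [← hβr, ← h, hzero]
      linarith
  have hrR : r ≤ R := by
    apply hmono r R hr0 hR0
    rw [hβr, hinv₂ M hM.le]
    exact hsM
  set b' := φ + (1 - φ) * (p * r ^ (p - 1)) with hb'def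
  -- derivative of β at r
  have hβ' : HasDerivAt β b' r := by
    have hg : HasDerivAt (fun x : ℝ => φ * x + (1 - φ) * x ^ p) b' r := by
      have h1 : HasDerivAt (fun x : ℝ => φ * x) φ r := by
        simpa using (hasDerivAt_id r).const_mul φ
      have h2 : HasDerivAt (fun x : ℝ => x ^ p) (p * r ^ (p - 1)) r :=
        Real.hasDerivAt_rpow_const (Or.inl hrpos.ne')
      exact h1.add (h2.const_mul (1 - φ))
    apply hg.congr_of_eventuallyEq
    filter_upwards [Ioi_mem_nhds hrpos] with x hx
    exact hβ x (le_of_lt hx)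
  have hΦ' : HasDerivAt Φ (deriv Φ s) s := (hdiff s hs0).hasDerivAt
  have hcomp : HasDerivAt (β ∘ Φ) (b' * deriv Φ s) s := hβ'.comp s hΦ'
  have hid : HasDerivAt (fun t : ℝ => t) (b' * deriv Φ s) s := by
    apply hcomp.congr_of_eventuallyEq
    filter_upwards [Ioi_mem_nhds hs0] with t ht
    exact (hinv₂ t (le_of_lt ht)).symm
  have huniq : b' * deriv Φ s = 1 := hid.unique (hasDerivAt_id s)
  have hrp_pos : 0 < r ^ p := Real.rpow_pos_of_pos hrpos p
  have hrp1_pos : 0 < r ^ (p - 1) := Real.rpow_pos_of_pos hrpos _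
  have hb'pos : 0 < b' := by
    have : 0 < (1 - φ) * (p * r ^ (p - 1)) :=
      mul_pos (by linarith) (mul_pos hp0 hrp1_pos)
    rw [hb'def]; linarith
  have hd : deriv Φ s = 1 / b' := by
    field_simp
    linarith [huniq]
  -- r^(p-1) * r = r^p
  have hrpow : r ^ (p - 1) * r = r ^ p := by
    have h := Real.rpow_add hrpos (p - 1) 1
    rw [Real.rpow_one] at h
    have hpe : p - 1 + 1 = p := by ring
    rw [hpe] at h
    exact h.symm
  have hDeq : b' * r = φ * r + (1 - φ) * p * r ^ p := by
    rw [hb'def, ← hrpow]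
    ring
  have hDpos : 0 < b' * r := mul_pos hb'pos hrpos
  -- s = φ r + (1-φ) r^p
  have hseq : s = φ * r + (1 - φ) * r ^ p := by
    rw [← hβr, hβ r hr0]
  -- r ≤ r^p * C
  have hrle : r ≤ r ^ p * C := by
    have h1 : r = r ^ p * r ^ (1 - p) := by
      have h := Real.rpow_add hrpos p (1 - p)
      have hpe : p + (1 - p) = 1 := by ring
      rw [hpe, Real.rpow_one] at h
      exact h
    have h2 : r ^ (1 - p) ≤ C :=
      Real.rpow_le_rpow hr0 (le_max_of_le_left hrR) (by linarith)
    nlinarith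
  -- D ≤ r^p * K
  have hDle : b' * r ≤ r ^ p * K := by
    rw [hDeq, hKdef]
    nlinarith
  -- final inequality
  have key : (1 + (1 - φ) * (1 - p) / K) * (b' * r) ≤ φ * r + (1 - φ) * r ^ p := by
    have h1 : (1 - φ) * (1 - p) / K * (b' * r) ≤ (1 - φ) * (1 - p) * r ^ p := by
      calc (1 - φ) * (1 - p) / K * (b' * r)
          ≤ (1 - φ) * (1 - p) / K * (r ^ p * K) :=
            mul_le_mul_of_nonneg_left hDle hA0.le
        _ = (1 - φ) * (1 - p) * r ^ p := by field_simp
    calc (1 + (1 - φ) * (1 - p) / K) * (b' * r)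
        = b' * r + (1 - φ) * (1 - p) / K * (b' * r) := by ring
      _ ≤ (φ * r + (1 - φ) * p * r ^ p) + (1 - φ) * (1 - p) * r ^ p :=
          add_le_add (le_of_eq hDeq) h1
      _ = φ * r + (1 - φ) * r ^ p := by ring
  have hform : s * (1 / b') / r = s / (b' * r) := by
    field_simp
  rw [hd, hform, le_div_iff₀ hDpos, hseq]
  exact key
end

section
/- Let N ≥ 1, p ∈ (0,1), φ ∈ [0,1), and for z ∈ ℝ^N with z ≠ 0 define b(z) = (φ + (1-φ)·|z|₁^(p-1))·z, where |z|₁ = Σᵢ|zᵢ|, and b(0) = 0. Then |b(z)|₁ = β(|z|₁) where β(r) = φr + (1-φ)r^p, and b : ℝ^N → ℝ^N is a bijection with inverse given by b⁻¹(u) = (Φ(|u|₁)/|u|₁)·u for u ≠ 0 and b⁻¹(0) = 0, where Φ = β⁻¹. -/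
open Real Set

theorem stmt_12 (N : ℕ) (hN : 1 ≤ N) (p φ : ℝ)
    (hp : p ∈ Set.Ioo (0:ℝ) 1) (hφ : φ ∈ Set.Ico (0:ℝ) 1)
    (β Φ : ℝ → ℝ)
    (hβ : ∀ r ≥ (0:ℝ), β r = φ * r + (1 - φ) * r ^ p)
    (hinv₁ : ∀ r ≥ (0:ℝ), Φ (β r) = r)
    (hinv₂ : ∀ s ≥ (0:ℝ), β (Φ s) = s)
    (b binv : (Fin N → ℝ) → (Fin N → ℝ))
    (hb : ∀ z : Fin N → ℝ, b z =
      if z = 0 then 0 else (φ + (1 - φ) * (∑ i, |z i|) ^ (p - 1)) • z)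
    (hbinv : ∀ u : Fin N → ℝ, binv u =
      if u = 0 then 0 else (Φ (∑ i, |u i|) / (∑ i, |u i|)) • u) :
    (∀ z : Fin N → ℝ, (∑ i, |b z i|) = β (∑ i, |z i|)) ∧
      Function.Bijective b ∧
      (∀ u : Fin N → ℝ, b (binv u) = u) ∧
      (∀ z : Fin N → ℝ, binv (b z) = z) := by
  obtain ⟨hp0, hp1⟩ := hp
  obtain ⟨hφ0, hφ1⟩ := hφ
  have h1φ : 0 < 1 - φ := by linarith
  have hβ0 : β 0 = 0 := by
    rw [hβ 0 le_rfl, Real.zero_rpow hp0.ne']; ring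
  have hsum_pos : ∀ z : Fin N → ℝ, z ≠ 0 → 0 < ∑ i, |z i| := by
    intro z hz
    obtain ⟨i, hi⟩ := Function.ne_iff.mp hz
    exact Finset.sum_pos' (fun j _ => abs_nonneg _)
      ⟨i, Finset.mem_univ i, abs_pos.mpr hi⟩
  have hsum_smul : ∀ (c : ℝ) (z : Fin N → ℝ), 0 ≤ c →
      ∑ i, |(c • z) i| = c * ∑ i, |z i| := by
    intro c z hc
    simp [Pi.smul_apply, smul_eq_mul, abs_mul, abs_of_nonneg hc, Finset.mul_sum]
  have hc_pos : ∀ t : ℝ, 0 < t → 0 < φ + (1 - φ) * t ^ (p - 1) := by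
    intro t ht
    have := Real.rpow_pos_of_pos ht (p - 1)
    nlinarith
  have hkey : ∀ t : ℝ, 0 < t → (φ + (1 - φ) * t ^ (p - 1)) * t = β t := by
    intro t ht
    rw [hβ t ht.le]
    have h : t ^ p = t ^ (p - 1) * t := by
      nth_rewrite 1 [show p = (p - 1) + 1 by ring]
      rw [Real.rpow_add_one ht.ne']
    rw [h]; ring
  have part1 : ∀ z : Fin N → ℝ, (∑ i, |b z i|) = β (∑ i, |z i|) := by
    intro z
    rcases eq_or_ne z 0 with rfl | hz
    · simp [hb, hβ0]
    · have hr := hsum_pos z hz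
      rw [hb z, if_neg hz, hsum_smul _ _ (hc_pos _ hr).le, hkey _ hr]
  have hΦ_nonneg : ∀ s : ℝ, 0 < s → 0 ≤ Φ s := by
    intro s hs
    set R : ℝ := (s / (1 - φ)) ^ (1 / p) with hR
    have hRnn : 0 ≤ R := Real.rpow_nonneg (by positivity) _
    have hRp : R ^ p = s / (1 - φ) := by
      rw [hR, ← Real.rpow_mul (by positivity), one_div,
        inv_mul_cancel₀ hp0.ne', Real.rpow_one]
    have hβR : s ≤ β R := by
      rw [hβ R hRnn, hRp]
      have : (1 - φ) * (s / (1 - φ)) = s := by field_simp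
      nlinarith [mul_nonneg hφ0 hRnn]
    have hcont : ContinuousOn β (Set.Icc 0 R) := by
      have hf : Continuous fun r : ℝ => φ * r + (1 - φ) * r ^ p := by
        apply Continuous.add
        · exact continuous_const.mul continuous_id
        · apply continuous_const.mul
          exact continuous_iff_continuousAt.mpr fun x =>
            Real.continuousAt_rpow_const x p (Or.inr hp0.le)
      exact hf.continuousOn.congr fun r hr => hβ r hr.1
    have hmem : s ∈ Set.Icc (β 0) (β R) := ⟨by rw [hβ0]; exact hs.le, hβR⟩
    obtain ⟨r, hrmem, hrs⟩ := intermediate_value_Icc hRnn hcont hmem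
    have : Φ s = r := by rw [← hrs, hinv₁ r hrmem.1]
    rw [this]; exact hrmem.1
  have hΦ_pos : ∀ s : ℝ, 0 < s → 0 < Φ s := by
    intro s hs
    rcases (hΦ_nonneg s hs).lt_or_eq with h | h
    · exact h
    · exfalso
      have h2 := hinv₂ s hs.le
      rw [← h, hβ0] at h2
      linarith
  have hright : ∀ u : Fin N → ℝ, b (binv u) = u := by
    intro u
    rcases eq_or_ne u 0 with rfl | hu
    · rw [hbinv, if_pos rfl, hb, if_pos rfl]
    · have hs := hsum_pos u hu
      set s : ℝ := ∑ i, |u i| with hsdef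
      have hΦp : 0 < Φ s := hΦ_pos s hs
      have hscale : 0 < Φ s / s := div_pos hΦp hs
      have hne : (Φ s / s) • u ≠ 0 := smul_ne_zero hscale.ne' hu
      rw [hbinv, if_neg hu, hb, if_neg hne]
      have hsum : ∑ i, |((Φ s / s) • u) i| = Φ s := by
        rw [hsum_smul _ _ hscale.le, ← hsdef, div_mul_cancel₀ _ hs.ne']
      rw [← hsdef, hsum, smul_smul]
      have hcΦ : (φ + (1 - φ) * Φ s ^ (p - 1)) * Φ s = s := by
        rw [hkey _ hΦp, hinv₂ s hs.le]
      have : (φ + (1 - φ) * Φ s ^ (p - 1)) * (Φ s / s) = 1 := by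
        rw [← mul_div_assoc, hcΦ, div_self hs.ne']
      rw [this, one_smul]
  have hleft : ∀ z : Fin N → ℝ, binv (b z) = z := by
    intro z
    rcases eq_or_ne z 0 with rfl | hz
    · rw [hb, if_pos rfl, hbinv, if_pos rfl]
    · have hr := hsum_pos z hz
      set r : ℝ := ∑ i, |z i| with hrdef
      set c : ℝ := φ + (1 - φ) * r ^ (p - 1) with hcdef
      have hcpos : 0 < c := hc_pos r hr
      have hbz : b z = c • z := by rw [hb, if_neg hz]
      have hbzne : b z ≠ 0 := hbz ▸ smul_ne_zero hcpos.ne' hz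
      have hsum : ∑ i, |b z i| = β r := part1 z
      have hβr : β r = c * r := (hkey r hr).symm
      rw [hbinv, if_neg hbzne, hsum, hinv₁ r hr.le, hβr, hbz, smul_smul]
      have : r / (c * r) * c = 1 := by
        field_simp
      rw [this, one_smul]
  exact ⟨part1, Function.bijective_iff_has_inverse.mpr ⟨binv, hleft, hright⟩,
    hright, hleft⟩
end
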